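/- Let f : phases → ℂ and g : phases → ℝ be arbitrary functions, and suppose α(t) ∈ 𝔻 and ψ(t) ∈ ℝ solve α̇ = i(fα² + gα + f̄) and ψ̇ = fα + g + f̄ ᾱ. Then for each fixed θ ∈ ℝ, the phase φ(t) defined by e^{iφ(t)} = M_{α(t),ψ(t)}(e^{iθ}) satisfies φ̇ = f e^{iφ} + g + f̄ e^{−iφ}. -/

import Mathlib

open Real Complex

/-- Möbius transformation preserving the unit circle. -/
noncomputable def mobius (α : ℂ) (ψ : ℝ) (w : ℂ) : ℂ :=
  (α + Complex.exp (Complex.I * ψ) * w) / (1 + (starRingEnd ℂ) α * Complex.exp (Complex.I * ψ) * w)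

theorem watanabe_strogatz_reduction (f : ℝ → ℂ) (g : ℝ → ℝ) (α : ℝ → ℂ) (ψ : ℝ → ℝ)
    (hα : ∀ t : ℝ, ‖α t‖ < 1)
    (hαode : ∀ t : ℝ, HasDerivAt α
      (Complex.I * (f t * (α t) ^ 2 + (g t : ℂ) * α t + (starRingEnd ℂ) (f t))) t)
    (hψode : ∀ t : ℝ, HasDerivAt ψ
      ((f t * α t + (g t : ℂ) + (starRingEnd ℂ) (f t) * (starRingEnd ℂ) (α t)).re) t)
    (θ : ℝ) (φ : ℝ → ℝ) (hφdiff : ∀ t : ℝ, DifferentiableAt ℝ φ t)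
    (hφ : ∀ t : ℝ, Complex.exp (Complex.I * (φ t : ℂ))
      = mobius (α t) (ψ t) (Complex.exp (Complex.I * (θ : ℂ)))) :
    ∀ t : ℝ, ((deriv φ t : ℝ) : ℂ)
      = f t * Complex.exp (Complex.I * (φ t : ℂ)) + (g t : ℂ)
        + (starRingEnd ℂ) (f t) * Complex.exp (-Complex.I * (φ t : ℂ)) := by
  intro t
  have hwabs : ‖Complex.exp (Complex.I * (θ : ℂ))‖ = 1 := by
    simp [Complex.norm_exp]
  have hEabs : ‖Complex.exp (Complex.I * (ψ t : ℂ))‖ = 1 := by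
    simp [Complex.norm_exp]
  set w : ℂ := Complex.exp (Complex.I * (θ : ℂ)) with hw
  set a : ℂ := α t with ha
  set E : ℂ := Complex.exp (Complex.I * (ψ t : ℂ)) with hE
  set F : ℂ := f t with hF
  set G : ℂ := ((g t : ℝ) : ℂ) with hG
  set φ' : ℝ := deriv φ t with hφ'
  -- the real value of ψ'
  have hψre : (((F * a + G + (starRingEnd ℂ) F * (starRingEnd ℂ) a).re : ℝ) : ℂ)
      = F * a + G + (starRingEnd ℂ) F * (starRingEnd ℂ) a := by
    have : (starRingEnd ℂ) (F * a + G + (starRingEnd ℂ) F * (starRingEnd ℂ) a)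
        = F * a + G + (starRingEnd ℂ) F * (starRingEnd ℂ) a := by
      simp only [map_add, map_mul, RingHomCompTriple.comp_apply, RingHom.id_apply, hG,
        Complex.conj_ofReal]
      ring
    exact Complex.conj_eq_iff_re.mp this
  have hca' : (starRingEnd ℂ) (Complex.I * (F * a ^ 2 + G * a + (starRingEnd ℂ) F))
      = -Complex.I * ((starRingEnd ℂ) F * ((starRingEnd ℂ) a) ^ 2 + G * (starRingEnd ℂ) a + F) := by
    simp only [map_mul, map_add, Complex.conj_I, map_pow, RingHomCompTriple.comp_apply,
      RingHom.id_apply, hG, Complex.conj_ofReal]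
    try ring
  set N : ℂ := a + E * w with hN
  set D : ℂ := 1 + (starRingEnd ℂ) a * E * w with hD
  have hD0 : D ≠ 0 := by
    intro h
    have h1 : (starRingEnd ℂ) a * E * w = -1 := by linear_combination h
    have h2 : ‖(starRingEnd ℂ) a * E * w‖ = ‖a‖ := by
      simp [map_mul, hEabs, hwabs]
    rw [h1] at h2
    simp at h2
    have := hα t
    rw [← ha, ← h2] at this
    exact lt_irrefl _ this
  have hzD : Complex.exp (Complex.I * (φ t : ℂ)) = N / D := by
    rw [hφ t]; rfl
  have hN0 : N ≠ 0 := by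
    intro h
    have := hzD
    rw [h, zero_div] at this
    exact Complex.exp_ne_zero _ this
  -- derivative of exp(I φ) via φ
  have hφd : HasDerivAt φ φ' t := (hφdiff t).hasDerivAt
  have hz1 : HasDerivAt (fun s => Complex.exp (Complex.I * (φ s : ℂ)))
      (Complex.exp (Complex.I * (φ t : ℂ)) * (Complex.I * (φ' : ℂ))) t :=
    ((hφd.ofReal_comp).const_mul Complex.I).cexp
  -- derivatives of the pieces of the Möbius map
  have hψd := hψode t
  have hEd : HasDerivAt (fun s => Complex.exp (Complex.I * (ψ s : ℂ)))
      (Complex.exp (Complex.I * (ψ t : ℂ)) *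
        (Complex.I * (((F * a + G + (starRingEnd ℂ) F * (starRingEnd ℂ) a).re : ℝ) : ℂ))) t :=
    ((hψd.ofReal_comp).const_mul Complex.I).cexp
  have hαd := hαode t
  have hcαd : HasDerivAt (fun s => (starRingEnd ℂ) (α s))
      ((starRingEnd ℂ) (Complex.I * (F * a ^ 2 + G * a + (starRingEnd ℂ) F))) t := hαd.star
  have hNd := hαd.add (hEd.mul_const w)
  have hDd := (((hcαd.mul hEd).mul_const w).const_add (1 : ℂ))
  have hfun : (fun s => Complex.exp (Complex.I * (φ s : ℂ)))
      = (fun s => (α s + Complex.exp (Complex.I * (ψ s : ℂ)) * w)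
          / (1 + (starRingEnd ℂ) (α s) * Complex.exp (Complex.I * (ψ s : ℂ)) * w)) := by
    funext s
    exact hφ s
  have hDd' : HasDerivAt (fun s => 1 + (starRingEnd ℂ) (α s)
      * Complex.exp (Complex.I * (ψ s : ℂ)) * w)
      (((starRingEnd ℂ) (Complex.I * (F * a ^ 2 + G * a + (starRingEnd ℂ) F)) * E
        + (starRingEnd ℂ) a * (E * (Complex.I
          * (((F * a + G + (starRingEnd ℂ) F * (starRingEnd ℂ) a).re : ℝ) : ℂ)))) * w) t := by
    convert hDd using 1
    rfl
    rfl
  have hq := hNd.div hDd' hD0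
  change HasDerivAt (fun s => (α s + Complex.exp (Complex.I * (ψ s : ℂ)) * w)
      / (1 + (starRingEnd ℂ) (α s) * Complex.exp (Complex.I * (ψ s : ℂ)) * w)) _ t at hq
  simp only [Pi.add_apply] at hq
  rw [← hfun] at hq
  have huniq := hz1.unique hq
  rw [hψre, hca', hzD] at huniq
  -- clear denominators in huniq
  rw [div_mul_eq_mul_div, div_eq_div_iff hD0 (pow_ne_zero 2 hD0)] at huniq
  have h2 : N * (Complex.I * (φ' : ℂ)) * D
      = (Complex.I * (F * a ^ 2 + G * a + (starRingEnd ℂ) F)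
          + E * (Complex.I * (F * a + G + (starRingEnd ℂ) F * (starRingEnd ℂ) a)) * w) * D
        - N * ((-Complex.I * ((starRingEnd ℂ) F * ((starRingEnd ℂ) a) ^ 2
              + G * (starRingEnd ℂ) a + F) * E
            + (starRingEnd ℂ) a * (E * (Complex.I
              * (F * a + G + (starRingEnd ℂ) F * (starRingEnd ℂ) a)))) * w) := by
    apply mul_right_cancel₀ hD0
    calc N * (Complex.I * (φ' : ℂ)) * D * D = N * (Complex.I * (φ' : ℂ)) * D ^ 2 := by ring
    _ = _ := by rw [huniq]; try ring
  have hmain : (φ' : ℂ) * (N * D) = F * N ^ 2 + G * N * D + (starRingEnd ℂ) F * D ^ 2 := by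
    apply mul_left_cancel₀ Complex.I_ne_zero
    rw [hN, hD]
    rw [hN, hD] at h2
    linear_combination h2
  have hinv : Complex.exp (-Complex.I * (φ t : ℂ)) = (N / D)⁻¹ := by
    rw [← hzD, ← Complex.exp_neg]
    congr 1
    ring
  rw [hzD, hinv, inv_div]
  field_simp
  linear_combination hmain
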